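/- Let ρ be a two-qubit state, let a1, a2, b be unit vectors in EuclideanSpace ℝ (Fin 3), let ε1, ε2 ∈ {1, −1}, and set b_n := ε_n·b (so Bob's two measurement vectors are parallel or antiparallel). Define the joint probabilities P(i,j,m,n) := Re(trace(ρ * (((1/2)·(I + (−1)^i·(a_m·σ))) ⊗ₖ ((1/2)·(I + (−1)^j·(b_n·σ)))))) for i, j ∈ {0,1} and m, n ∈ {1,2}. Then the full statistics admits a finite LHV-LHS model: there exist N : ℕ, reals p(λ) ≥ 0 with Σ_λ p(λ) = 1, reals q(i,m,λ) ∈ [0,1] with q(0,m,λ) + q(1,m,λ) = 1, and positive semidefinite trace-one 2×2 complex matrices ρ(λ) such that P(i,j,m,n) = Σ_λ p(λ)·q(i,m,λ)·Re(trace(ρ(λ) * ((1/2)·(I + (−1)^j·(b_n·σ))))) for all i, j, m, n. -/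

import Mathlib

open Matrix Polynomial
open scoped Kronecker Matrix ComplexOrder

noncomputable section

/-- Pauli matrix σ1. -/
def σ₁ : Matrix (Fin 2) (Fin 2) ℂ := !![0, 1; 1, 0]
/-- Pauli matrix σ2. -/
def σ₂ : Matrix (Fin 2) (Fin 2) ℂ := !![0, -Complex.I; Complex.I, 0]
/-- Pauli matrix σ3. -/
def σ₃ : Matrix (Fin 2) (Fin 2) ℂ := !![1, 0; 0, -1]

/-- The three Pauli matrices. -/
def pauli : Fin 3 → Matrix (Fin 2) (Fin 2) ℂ := ![σ₁, σ₂, σ₃]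

/-- `v·σ` for a real 3-vector `v`. -/
def pauliVec (v : EuclideanSpace ℝ (Fin 3)) : Matrix (Fin 2) (Fin 2) ℂ :=
  (v 0 : ℂ) • σ₁ + (v 1 : ℂ) • σ₂ + (v 2 : ℂ) • σ₃

/-- Full correlation `E = Re tr(ρ ((a·σ) ⊗ₖ (b·σ)))`. -/
def corrE (ρ : Matrix (Fin 2 × Fin 2) (Fin 2 × Fin 2) ℂ)
    (a b : EuclideanSpace ℝ (Fin 3)) : ℝ :=
  ((ρ * (pauliVec a ⊗ₖ pauliVec b)).trace).re

/-- Correlation matrix `T i j = Re tr(ρ (σᵢ ⊗ₖ σⱼ))` of a two-qubit state. -/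
def corrMatrix (ρ : Matrix (Fin 2 × Fin 2) (Fin 2 × Fin 2) ℂ) : Matrix (Fin 3) (Fin 3) ℝ :=
  fun i j => ((ρ * (pauli i ⊗ₖ pauli j)).trace).re

/-- The CHSH value `E(1,1) + E(2,1) + E(1,2) − E(2,2)` of `ρ` at `(a1,a2,b1,b2)`. -/
def CHSHval (ρ : Matrix (Fin 2 × Fin 2) (Fin 2 × Fin 2) ℂ)
    (a1 a2 b1 b2 : EuclideanSpace ℝ (Fin 3)) : ℝ :=
  corrE ρ a1 b1 + corrE ρ a2 b1 + corrE ρ a1 b2 - corrE ρ a2 b2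

/-- The real inner product on `EuclideanSpace ℝ (Fin 3)`. -/
def rip (x y : EuclideanSpace ℝ (Fin 3)) : ℝ := inner ℝ x y

/-- Action of a real 3×3 matrix on a Euclidean 3-vector. -/
def matVec (T : Matrix (Fin 3) (Fin 3) ℝ) (v : EuclideanSpace ℝ (Fin 3)) :
    EuclideanSpace ℝ (Fin 3) :=
  (EuclideanSpace.equiv (Fin 3) ℝ).symm (T.mulVec (EuclideanSpace.equiv (Fin 3) ℝ v))

/-- `b1', b2'` is the dual basis of the pair `b1, b2` inside `span{b1, b2}`:
`⟪b'_m, b_n⟫ = δ_{mn}`. -/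
def IsDualPair (b1 b2 b1' b2' : EuclideanSpace ℝ (Fin 3)) : Prop :=
  b1' ∈ Submodule.span ℝ ({b1, b2} : Set (EuclideanSpace ℝ (Fin 3))) ∧
  b2' ∈ Submodule.span ℝ ({b1, b2} : Set (EuclideanSpace ℝ (Fin 3))) ∧
  rip b1' b1 = 1 ∧ rip b1' b2 = 0 ∧ rip b2' b1 = 0 ∧ rip b2' b2 = 1

/-- The analog CHSH value of `ρ` at `(a1,a2,b1,b2)`, with `b1', b2'` the dual basis of
`b1, b2`. -/
def ACHSHval (ρ : Matrix (Fin 2 × Fin 2) (Fin 2 × Fin 2) ℂ)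
    (a1 a2 b1 b2 b1' b2' : EuclideanSpace ℝ (Fin 3)) : ℝ :=
  ‖(corrE ρ a1 b1 + corrE ρ a2 b1) • b1' + (corrE ρ a1 b2 + corrE ρ a2 b2) • b2'‖ +
  ‖(corrE ρ a1 b1 - corrE ρ a2 b1) • b1' + (corrE ρ a1 b2 - corrE ρ a2 b2) • b2'‖

/-- A family `P a m` (outcome `a`, setting `m`) of 2×2 matrices admits a finite
local-hidden-state model. -/
def HasLHSModel (P : Fin 2 → Fin 2 → Matrix (Fin 2) (Fin 2) ℂ) : Prop :=
  ∃ (N : ℕ) (τ : Fin N → Matrix (Fin 2) (Fin 2) ℂ) (q : Fin 2 → Fin 2 → Fin N → ℝ),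
    (∀ lam, (τ lam).PosSemidef) ∧
    (∀ a m lam, 0 ≤ q a m lam ∧ q a m lam ≤ 1) ∧
    (∀ m lam, q 0 m lam + q 1 m lam = 1) ∧
    (∀ a m, P a m = ∑ lam, q a m lam • τ lam)

/-- Full correlations `E m n` admit a finite LHV-LHS model with respect to Bob's
measurement vectors `b 0, b 1`. -/
def HasLHVLHSModel (E : Fin 2 → Fin 2 → ℝ) (b : Fin 2 → EuclideanSpace ℝ (Fin 3)) : Prop :=
  ∃ (N : ℕ) (p : Fin N → ℝ) (e : Fin 2 → Fin N → ℝ)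
    (ρs : Fin N → Matrix (Fin 2) (Fin 2) ℂ),
    (∀ lam, 0 ≤ p lam) ∧ (∑ lam, p lam = 1) ∧
    (∀ m lam, e m lam ∈ Set.Icc (-1 : ℝ) 1) ∧
    (∀ lam, (ρs lam).PosSemidef ∧ (ρs lam).trace = 1) ∧
    (∀ m n, E m n = ∑ lam, p lam * e m lam * ((ρs lam * pauliVec (b n)).trace).re)

/-- Full correlations `E m n` admit a finite LHV model. -/
def HasLHVModel (E : Fin 2 → Fin 2 → ℝ) : Prop :=
  ∃ (N : ℕ) (p : Fin N → ℝ) (e f : Fin 2 → Fin N → ℝ),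
    (∀ lam, 0 ≤ p lam) ∧ (∑ lam, p lam = 1) ∧
    (∀ m lam, e m lam ∈ Set.Icc (-1 : ℝ) 1) ∧
    (∀ n lam, f n lam ∈ Set.Icc (-1 : ℝ) 1) ∧
    (∀ m n, E m n = ∑ lam, p lam * e m lam * f n lam)

/-- The effect `(1/2)(I + (−1)^i v·σ)` of the projective measurement along `v`. -/
def effect (v : EuclideanSpace ℝ (Fin 3)) (i : Fin 2) : Matrix (Fin 2) (Fin 2) ℂ :=
  (1/2 : ℝ) • ((1 : Matrix (Fin 2) (Fin 2) ℂ) + ((-1 : ℝ) ^ (i : ℕ)) • pauliVec v)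

/-! ### Auxiliary lemmas for Statement 12 -/


lemma aux_mul (x y z : ℂ) (h : x^2+y^2+z^2 = 1) :
    (x•σ₁+y•σ₂+z•σ₃) * (x•σ₁+y•σ₂+z•σ₃) = 1 := by
  ext i j
  fin_cases i <;> fin_cases j <;>
    simp [σ₁, σ₂, σ₃, Matrix.mul_apply, Fin.sum_univ_two, Matrix.one_apply] <;>
  first
    | ring1
    | linear_combination h - y^2 * Complex.I_sq

lemma aux_trace (x y z : ℂ) : (x•σ₁+y•σ₂+z•σ₃).trace = 0 := by
  simp [Matrix.trace, Fin.sum_univ_two, σ₁, σ₂, σ₃]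

lemma aux_conjT (x y z : ℝ) :
    ((x:ℂ)•σ₁+(y:ℂ)•σ₂+(z:ℂ)•σ₃)ᴴ = (x:ℂ)•σ₁+(y:ℂ)•σ₂+(z:ℂ)•σ₃ := by
  ext i j
  fin_cases i <;> fin_cases j <;>
    simp [σ₁, σ₂, σ₃, Matrix.conjTranspose_apply, Complex.ext_iff]

lemma norm_sq_eq' {v : EuclideanSpace ℝ (Fin 3)} (hv : ‖v‖ = 1) :
    (v 0)^2 + (v 1)^2 + (v 2)^2 = 1 := by
  rw [EuclideanSpace.norm_eq, Real.sqrt_eq_one, Fin.sum_univ_three] at hv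
  simpa [Real.norm_eq_abs, sq_abs] using hv

lemma pauliVec_mul_self {v : EuclideanSpace ℝ (Fin 3)} (hv : ‖v‖ = 1) :
    pauliVec v * pauliVec v = 1 := by
  have h := norm_sq_eq' hv
  have hc : (v 0 : ℂ)^2 + (v 1 : ℂ)^2 + (v 2 : ℂ)^2 = 1 := by
    have h' := congrArg Complex.ofReal h
    push_cast at h'
    exact h'
  exact aux_mul _ _ _ hc

lemma pauliVec_trace (v : EuclideanSpace ℝ (Fin 3)) : (pauliVec v).trace = 0 :=
  aux_trace _ _ _

lemma pauliVec_conjT (v : EuclideanSpace ℝ (Fin 3)) : (pauliVec v)ᴴ = pauliVec v :=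
  aux_conjT _ _ _

lemma pauliVec_smul' (c : ℝ) (v : EuclideanSpace ℝ (Fin 3)) :
    pauliVec (c • v) = (c : ℂ) • pauliVec v := by
  simp only [pauliVec, PiLp.smul_apply, smul_eq_mul, Complex.ofReal_mul, smul_add, smul_smul]

lemma effect_trace' (v : EuclideanSpace ℝ (Fin 3)) (i : Fin 2) : (effect v i).trace = 1 := by
  simp [effect, Matrix.trace_smul, Matrix.trace_add, pauliVec_trace, Matrix.trace_one]

lemma effect_conjT (v : EuclideanSpace ℝ (Fin 3)) (i : Fin 2) : (effect v i)ᴴ = effect v i := by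
  have h1 : ((((-1:ℝ) ^ (i:ℕ)) • pauliVec v))ᴴ = ((-1:ℝ)^(i:ℕ)) • pauliVec v := by
    rw [Matrix.conjTranspose_smul, pauliVec_conjT]
    norm_num
  simp [effect, Matrix.conjTranspose_smul, Matrix.conjTranspose_add, h1]

lemma effect_add' (v : EuclideanSpace ℝ (Fin 3)) : effect v 0 + effect v 1 = 1 := by
  simp only [effect, Fin.val_zero, Fin.val_one, pow_zero, pow_one, one_smul, neg_one_smul,
    smul_add, ← add_smul]
  module

lemma effect_mul' (v : EuclideanSpace ℝ (Fin 3)) (hv : ‖v‖ = 1) (i j : Fin 2) :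
    effect v i * effect v j = if i = j then effect v i else 0 := by
  have hB := pauliVec_mul_self hv
  fin_cases i <;> fin_cases j <;>
    simp only [effect, Fin.val_zero, Fin.val_one, pow_zero, pow_one, one_smul, neg_one_smul,
      Matrix.smul_mul, Matrix.mul_smul, smul_smul, add_mul, mul_add, one_mul, mul_one,
      neg_mul, mul_neg, hB, if_true, if_false, reduceIte] <;>
  · push_cast
    match_scalars <;> ring

lemma effect_posSemidef' (v : EuclideanSpace ℝ (Fin 3)) (hv : ‖v‖ = 1) (i : Fin 2) :
    (effect v i).PosSemidef := by
  have h : effect v i = (effect v i)ᴴ * effect v i := by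
    rw [effect_conjT]
    have := effect_mul' v hv i i
    simp at this
    rw [this]
  rw [h]
  exact Matrix.posSemidef_conjTranspose_mul_self _

lemma kron_conjT (A B : Matrix (Fin 2) (Fin 2) ℂ) : (A ⊗ₖ B)ᴴ = Aᴴ ⊗ₖ Bᴴ := by
  ext i j
  simp [Matrix.conjTranspose_apply, Matrix.kroneckerMap_apply, mul_comm]

open scoped MatrixOrder in
lemma psd_eq_conjT_mul_self {n : Type*} [Fintype n] [DecidableEq n] {A : Matrix n n ℂ}
    (hA : A.PosSemidef) : ∃ B : Matrix n n ℂ, A = Bᴴ * B := by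
  obtain ⟨X, hX, -, hXX⟩ :=
    CFC.exists_sqrt_of_isSelfAdjoint_of_quasispectrumRestricts (sub_zero A ▸ hA.isHermitian)
      (QuasispectrumRestricts.nnreal_of_nonneg (sub_zero A ▸ hA.nonneg))
  refine ⟨X, ?_⟩
  rw [← sub_zero A, ← hXX]
  exact congrArg (· * X) hX.star_eq.symm

lemma psd_kron {A B : Matrix (Fin 2) (Fin 2) ℂ} (hA : A.PosSemidef) (hB : B.PosSemidef) :
    (A ⊗ₖ B).PosSemidef := by
  obtain ⟨C, rfl⟩ := psd_eq_conjT_mul_self hA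
  obtain ⟨D, rfl⟩ := psd_eq_conjT_mul_self hB
  rw [Matrix.mul_kronecker_mul, ← kron_conjT]
  exact Matrix.posSemidef_conjTranspose_mul_self _

lemma psd_trace_nonneg {n : Type*} [Fintype n] [DecidableEq n] {M : Matrix n n ℂ}
    (hM : M.PosSemidef) : 0 ≤ M.trace := by
  rw [Matrix.trace]
  apply Finset.sum_nonneg
  intro i _
  exact hM.diag_nonneg

lemma trace_mul_psd_nonneg {n : Type*} [Fintype n] [DecidableEq n] {ρ M : Matrix n n ℂ}
    (hρ : ρ.PosSemidef) (hM : M.PosSemidef) : 0 ≤ ((ρ * M).trace).re := by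
  obtain ⟨C, rfl⟩ := psd_eq_conjT_mul_self hρ
  obtain ⟨D, rfl⟩ := psd_eq_conjT_mul_self hM
  have h1 : Cᴴ * C * (Dᴴ * D) = (Cᴴ * (C * Dᴴ)) * D := by
    simp only [Matrix.mul_assoc]
  have h2 : ((Cᴴ * C * (Dᴴ * D)).trace) = (((C * Dᴴ)ᴴ * (C * Dᴴ)).trace) := by
    rw [h1, Matrix.trace_mul_comm, Matrix.conjTranspose_mul, Matrix.conjTranspose_conjTranspose,
      Matrix.mul_assoc]
  rw [h2]
  have := psd_trace_nonneg (Matrix.posSemidef_conjTranspose_mul_self (C * Dᴴ))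
  exact (Complex.le_def.mp this).1

lemma effect_neg_zero (v : EuclideanSpace ℝ (Fin 3)) :
    effect ((-1 : ℝ) • v) 0 = effect v 1 := by
  unfold effect
  rw [pauliVec_smul']
  simp only [Fin.val_zero, Fin.val_one, pow_zero, pow_one]
  push_cast
  module

lemma effect_neg_one (v : EuclideanSpace ℝ (Fin 3)) :
    effect ((-1 : ℝ) • v) 1 = effect v 0 := by
  unfold effect
  rw [pauliVec_smul']
  simp only [Fin.val_zero, Fin.val_one, pow_zero, pow_one]
  push_cast
  module

/-! ### The LHS model data -/

def tF (ρ : Matrix (Fin 2 × Fin 2) (Fin 2 × Fin 2) ℂ) (a : Fin 2 → EuclideanSpace ℝ (Fin 3))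
    (b : EuclideanSpace ℝ (Fin 3)) : Fin 2 → Fin 2 → Fin 2 → ℝ :=
  fun i m s => ((ρ * (effect (a m) i ⊗ₖ effect b s)).trace).re

def pF (ρ : Matrix (Fin 2 × Fin 2) (Fin 2 × Fin 2) ℂ) (b : EuclideanSpace ℝ (Fin 3)) :
    Fin 2 → ℝ :=
  fun s => ((ρ * ((1 : Matrix (Fin 2) (Fin 2) ℂ) ⊗ₖ effect b s)).trace).re

def qF (ρ : Matrix (Fin 2 × Fin 2) (Fin 2 × Fin 2) ℂ) (a : Fin 2 → EuclideanSpace ℝ (Fin 3))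
    (b : EuclideanSpace ℝ (Fin 3)) : Fin 2 → Fin 2 → Fin 2 → ℝ :=
  fun i m s => if pF ρ b s = 0 then 1/2 else tF ρ a b i m s / pF ρ b s


/-- if Bob's two measurement vectors are `ε1 b` and `ε2 b` with
`ε1, ε2 ∈ {1, −1}` (parallel or antiparallel), then the full statistics of any two-qubit
state `ρ` admits a finite LHV-LHS model. -/
theorem parallel_measurements_unsteerable (ρ : Matrix (Fin 2 × Fin 2) (Fin 2 × Fin 2) ℂ)
    (hρ : ρ.PosSemidef) (htr : ρ.trace = 1)
    (a : Fin 2 → EuclideanSpace ℝ (Fin 3)) (ha : ∀ m, ‖a m‖ = 1)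
    (b : EuclideanSpace ℝ (Fin 3)) (hb : ‖b‖ = 1)
    (ε : Fin 2 → ℝ) (hε : ∀ n, ε n = 1 ∨ ε n = -1) :
    ∃ (N : ℕ) (p : Fin N → ℝ) (q : Fin 2 → Fin 2 → Fin N → ℝ)
      (ρs : Fin N → Matrix (Fin 2) (Fin 2) ℂ),
      (∀ lam, 0 ≤ p lam) ∧ (∑ lam, p lam = 1) ∧
      (∀ i m lam, 0 ≤ q i m lam ∧ q i m lam ≤ 1) ∧
      (∀ m lam, q 0 m lam + q 1 m lam = 1) ∧
      (∀ lam, (ρs lam).PosSemidef ∧ (ρs lam).trace = 1) ∧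
      (∀ i j m n, ((ρ * (effect (a m) i ⊗ₖ effect (ε n • b) j)).trace).re
        = ∑ lam, p lam * q i m lam * ((ρs lam * effect (ε n • b) j).trace).re) := by
  classical
  have htnn : ∀ i m s, 0 ≤ tF ρ a b i m s := fun i m s =>
    trace_mul_psd_nonneg hρ (psd_kron (effect_posSemidef' _ (ha m) i) (effect_posSemidef' _ hb s))
  have hpnn : ∀ s, 0 ≤ pF ρ b s := fun s =>
    trace_mul_psd_nonneg hρ (psd_kron Matrix.PosSemidef.one (effect_posSemidef' _ hb s))
  have htsum : ∀ m s, tF ρ a b 0 m s + tF ρ a b 1 m s = pF ρ b s := by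
    intro m s
    simp only [tF, pF]
    rw [← Complex.add_re, ← Matrix.trace_add, ← mul_add, ← Matrix.add_kronecker, effect_add']
  have htle : ∀ i m s, tF ρ a b i m s ≤ pF ρ b s := by
    intro i m s
    have h0 := htnn 0 m s; have h1 := htnn 1 m s; have hs := htsum m s
    by_cases h : i = 0
    · subst h; linarith
    · have : i = 1 := by omega
      subst this; linarith
  have hpsum : pF ρ b 0 + pF ρ b 1 = 1 := by
    simp only [pF]
    rw [← Complex.add_re, ← Matrix.trace_add, ← mul_add, ← Matrix.kronecker_add, effect_add',
      Matrix.one_kronecker_one, mul_one, htr]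
    simp
  have hkey : ∀ i m s, pF ρ b s * qF ρ a b i m s = tF ρ a b i m s := by
    intro i m s
    by_cases h : pF ρ b s = 0
    · have h1 := htnn i m s; have h2 := htle i m s
      simp only [qF, if_pos h, h]
      linarith
    · simp only [qF, if_neg h]
      field_simp
  refine ⟨2, pF ρ b, qF ρ a b, fun s => effect b s, hpnn,
    by rw [Fin.sum_univ_two, hpsum], ?_, ?_, ?_, ?_⟩
  · intro i m s
    by_cases h : pF ρ b s = 0
    · simp only [qF, if_pos h]; norm_num
    · simp only [qF, if_neg h]
      have hps : 0 < pF ρ b s := lt_of_le_of_ne (hpnn s) (Ne.symm h)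
      exact ⟨div_nonneg (htnn i m s) (hpnn s), (div_le_one hps).mpr (htle i m s)⟩
  · intro m s
    by_cases h : pF ρ b s = 0
    · simp only [qF, if_pos h]; norm_num
    · simp only [qF, if_neg h]
      rw [← add_div, htsum, div_self h]
  · intro s
    exact ⟨effect_posSemidef' _ hb s, effect_trace' _ _⟩
  · intro i j m n
    obtain ⟨s', hs'⟩ : ∃ s', effect (ε n • b) j = effect b s' := by
      rcases hε n with h | h
      · exact ⟨j, by rw [h, one_smul]⟩
      · by_cases hj : j = 0
        · subst hj; exact ⟨1, by rw [h]; exact effect_neg_zero b⟩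
        · have : j = 1 := by omega
          subst this; exact ⟨0, by rw [h]; exact effect_neg_one b⟩
    rw [hs']
    have htr2 : ∀ lam : Fin 2, ((effect b lam * effect b s').trace).re
        = if lam = s' then 1 else 0 := by
      intro lam
      rw [effect_mul' b hb]
      split_ifs with h
      · rw [effect_trace']; simp
      · simp
    rw [Fin.sum_univ_two, htr2 0, htr2 1]
    show tF ρ a b i m s' = _
    by_cases hs0 : s' = 0
    · subst hs0
      simp only [if_pos rfl, one_ne_zero, reduceIte, mul_one, mul_zero, add_zero]
      exact (hkey i m 0).symm
    · have : s' = 1 := by omega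
      subst this
      simp only [zero_ne_one, reduceIte, if_pos rfl, mul_one, mul_zero, zero_add]
      exact (hkey i m 1).symm


end
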